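/- Let 𝓡 be the Rado graph. A countably infinite graph G is 0-ruled if and only if G is isomorphic to a spanning subgraph of 𝓡; and G is 0-coruled if and only if 𝓡 is isomorphic to a spanning subgraph of G. -/

import Mathlib

/-- The Rado graph on `ℕ`: `m < n` are adjacent iff the `m`-th binary digit of `n` is `1`. -/
def radoGraph : SimpleGraph ℕ where
  Adj m n := (m < n ∧ n.testBit m) ∨ (n < m ∧ m.testBit n)
  symm := by
    constructor
    intro m n h
    exact h.elim Or.inr Or.inl
  loopless := by
    constructor
    intro m h
    exact h.elim (fun h' => lt_irrefl m h'.1) (fun h' => lt_irrefl m h'.1)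

/-- `G` is isomorphic to a spanning subgraph of `H`. -/
def IsSpanningSubgraphOf {V W : Type*} (G : SimpleGraph V) (H : SimpleGraph W) : Prop :=
  ∃ f : V → W, Function.Bijective f ∧ ∀ u v : V, G.Adj u v → H.Adj (f u) (f v)

lemma rado_adj (m n : ℕ) :
    radoGraph.Adj m n ↔ (m < n ∧ n.testBit m) ∨ (n < m ∧ m.testBit n) := Iff.rfl

/-! ### Auxiliary facts about binary digits -/

lemma le_foldrMax (l : List ℕ) : ∀ k ∈ l, k ≤ l.foldr max 0 := by
  induction l with
  | nil => simp
  | cons a l ih =>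
    intro k hk
    rcases List.mem_cons.1 hk with rfl | h
    · exact le_max_left _ _
    · exact le_trans (ih k h) (le_max_right _ _)

/-- Bitwise-or of `2^a` for `a` in a list, together with a base value. -/
def orList (l : List ℕ) (b : ℕ) : ℕ := l.foldr (fun a acc => 2 ^ a ||| acc) b

lemma testBit_orList (l : List ℕ) (b j : ℕ) :
    (orList l b).testBit j = true ↔ j ∈ l ∨ b.testBit j = true := by
  induction l with
  | nil => simp [orList]
  | cons a l ih =>
    show ((2 ^ a ||| orList l b).testBit j = true) ↔ _
    rw [Nat.testBit_or, Bool.or_eq_true, ih]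
    by_cases h : a = j
    · subst h; simp [Nat.testBit_two_pow_self]
    · rw [Nat.testBit_two_pow_of_ne h]
      have h' : ¬ j = a := fun h' => h h'.symm
      simp only [List.mem_cons, Bool.false_eq_true, false_or]
      tauto

lemma rado_ruled (S : Finset ℕ) : ∃ n, n ∉ S ∧ ∀ s ∈ S, ¬ radoGraph.Adj n s := by
  set M := S.sup id + 1 with hM
  have hM2 : M < 2 ^ M := Nat.lt_two_pow_self
  refine ⟨2 ^ M, ?_, ?_⟩
  · intro h
    have h1 : 2 ^ M ≤ S.sup id := Finset.le_sup (f := id) h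
    omega
  · intro s hs hadj
    have hsM : s < M := Nat.lt_succ_of_le (Finset.le_sup (f := id) hs)
    rcases (rado_adj _ _).1 hadj with ⟨h, _⟩ | ⟨_, h⟩
    · omega
    · rw [Nat.testBit_two_pow_of_ne (by omega : M ≠ s)] at h
      simp at h

lemma rado_coruled (S : Finset ℕ) : ∃ n, n ∉ S ∧ ∀ s ∈ S, radoGraph.Adj n s := by
  set M := S.sup id + 1 with hM
  have hM2 : M < 2 ^ M := Nat.lt_two_pow_self
  set n := orList S.toList (2 ^ M) with hn
  have hbM : n.testBit M = true :=
    (testBit_orList _ _ _).2 (Or.inr Nat.testBit_two_pow_self)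
  have hb2 : 2 ^ M ≤ n := Nat.ge_two_pow_of_testBit hbM
  refine ⟨n, ?_, ?_⟩
  · intro h
    have h1 : n ≤ S.sup id := Finset.le_sup (f := id) h
    omega
  · intro s hs
    have ht : n.testBit s = true :=
      (testBit_orList _ _ _).2 (Or.inl (Finset.mem_toList.2 hs))
    have hsn : s < n := lt_of_lt_of_le ((Nat.lt_two_pow_self : s < 2 ^ s)) (Nat.ge_two_pow_of_testBit ht)
    exact (rado_adj _ _).2 (Or.inr ⟨hsn, ht⟩)

/-! ### Generic back-and-forth construction -/

section Generic

variable {α β : Type*} (G : SimpleGraph α) (H : SimpleGraph β) (ea : ℕ → α) (eb : ℕ → β)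

/-- Invariant for partial maps in the back-and-forth construction. -/
def GInv (l : List (α × β)) : Prop :=
  (l.map Prod.fst).Nodup ∧ (l.map Prod.snd).Nodup ∧
    ∀ p ∈ l, ∀ q ∈ l, G.Adj p.1 q.1 → H.Adj p.2 q.2

/-- A good extension of a partial map at step `n`. -/
def GGood (l : List (α × β)) (n : ℕ) (p : α × β) : Prop :=
  p.1 ∉ l.map Prod.fst ∧ p.2 ∉ l.map Prod.snd ∧
    (∀ q ∈ l, G.Adj p.1 q.1 → H.Adj p.2 q.2) ∧
    (if n % 2 = 0 then ea (n / 2) ∈ (p :: l).map Prod.fst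
     else eb (n / 2) ∈ (p :: l).map Prod.snd)

variable [Nonempty α] [Nonempty β]

open Classical in
/-- The chain of partial maps. -/
noncomputable def gchain : ℕ → List (α × β)
  | 0 => []
  | n + 1 =>
      (if h : ∃ p, GGood G H ea eb (gchain n) n p then h.choose else Classical.arbitrary _)
        :: gchain n

lemma gchain_mono {m n : ℕ} (h : m ≤ n) :
    ∀ p ∈ gchain G H ea eb m, p ∈ gchain G H ea eb n := by
  induction n with
  | zero =>
    intro p hp
    rwa [Nat.le_zero.1 h] at hp
  | succ n ih =>
    rcases eq_or_lt_of_le h with rfl | h'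
    · exact fun p hp => hp
    · intro p hp
      exact List.mem_cons_of_mem _ (ih (Nat.lt_succ_iff.1 h') p hp)

variable (H1 : ∀ l : List (α × β), ∀ a : α,
      ∃ b, b ∉ l.map Prod.snd ∧ ∀ q ∈ l, G.Adj a q.1 → H.Adj b q.2)
    (H2 : ∀ l : List (α × β), ∀ b : β,
      ∃ a, a ∉ l.map Prod.fst ∧ ∀ q ∈ l, G.Adj a q.1 → H.Adj b q.2)

variable [Infinite α] [Infinite β]

include H1 H2 in
lemma gexists (l : List (α × β)) (n : ℕ) : ∃ p, GGood G H ea eb l n p := by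
  classical
  by_cases hn : n % 2 = 0
  · by_cases ht : ea (n / 2) ∈ l.map Prod.fst
    · obtain ⟨a, ha⟩ := Infinite.exists_notMem_finset (l.map Prod.fst).toFinset
      rw [List.mem_toFinset] at ha
      obtain ⟨b, hb, hedge⟩ := H1 l a
      refine ⟨(a, b), ha, hb, hedge, ?_⟩
      rw [if_pos hn]
      exact List.mem_cons_of_mem _ ht
    · obtain ⟨b, hb, hedge⟩ := H1 l (ea (n / 2))
      refine ⟨(ea (n / 2), b), ht, hb, hedge, ?_⟩
      rw [if_pos hn]
      exact List.mem_cons_self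
  · by_cases ht : eb (n / 2) ∈ l.map Prod.snd
    · obtain ⟨b, hb⟩ := Infinite.exists_notMem_finset (l.map Prod.snd).toFinset
      rw [List.mem_toFinset] at hb
      obtain ⟨a, ha, hedge⟩ := H2 l b
      refine ⟨(a, b), ha, hb, hedge, ?_⟩
      rw [if_neg hn]
      exact List.mem_cons_of_mem _ ht
    · obtain ⟨a, ha, hedge⟩ := H2 l (eb (n / 2))
      refine ⟨(a, eb (n / 2)), ha, ht, hedge, ?_⟩
      rw [if_neg hn]
      exact List.mem_cons_self

include H1 H2 in
lemma ginv : ∀ n, GInv G H (gchain G H ea eb n)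
  | 0 => by
      refine ⟨by simp [gchain], by simp [gchain], ?_⟩
      intro p hp
      simp [gchain] at hp
  | n + 1 => by
      have IH := ginv n
      have hex := gexists G H ea eb H1 H2 (gchain G H ea eb n) n
      have heq : gchain G H ea eb (n + 1) = hex.choose :: gchain G H ea eb n := by
        rw [gchain, dif_pos hex]
      obtain ⟨h1, h2, h3, _⟩ := hex.choose_spec
      rw [heq]
      refine ⟨?_, ?_, ?_⟩
      · rw [List.map_cons, List.nodup_cons]
        exact ⟨h1, IH.1⟩
      · rw [List.map_cons, List.nodup_cons]
        exact ⟨h2, IH.2.1⟩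
      · intro p hp q hq
        rcases List.mem_cons.1 hp with rfl | hp' <;> rcases List.mem_cons.1 hq with rfl | hq'
        · intro hadj; exact absurd hadj (G.irrefl)
        · exact h3 q hq'
        · intro hadj; exact (h3 p hp' hadj.symm).symm
        · exact IH.2.2 p hp' q hq'

include H1 H2 in
lemma gcover1 (k : ℕ) : ea k ∈ (gchain G H ea eb (2 * k + 1)).map Prod.fst := by
  have hex := gexists G H ea eb H1 H2 (gchain G H ea eb (2 * k)) (2 * k)
  have heq : gchain G H ea eb (2 * k + 1) = hex.choose :: gchain G H ea eb (2 * k) := by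
    rw [gchain, dif_pos hex]
  have htarget := hex.choose_spec.2.2.2
  rw [if_pos (by omega : 2 * k % 2 = 0)] at htarget
  rw [heq]
  have h2 : 2 * k / 2 = k := by omega
  rwa [h2] at htarget

include H1 H2 in
lemma gcover2 (k : ℕ) : eb k ∈ (gchain G H ea eb (2 * k + 2)).map Prod.snd := by
  have hex := gexists G H ea eb H1 H2 (gchain G H ea eb (2 * k + 1)) (2 * k + 1)
  have heq : gchain G H ea eb (2 * k + 2) = hex.choose :: gchain G H ea eb (2 * k + 1) := by
    rw [gchain, dif_pos hex]
  have htarget := hex.choose_spec.2.2.2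
  rw [if_neg (by omega : ¬ (2 * k + 1) % 2 = 0)] at htarget
  rw [heq]
  have h2 : (2 * k + 1) / 2 = k := by omega
  rwa [h2] at htarget

include H1 H2 in
theorem exists_spanning_aux (hea : Function.Surjective ea) (heb : Function.Surjective eb) :
    IsSpanningSubgraphOf G H := by
  classical
  have inv := ginv G H ea eb H1 H2
  have total : ∀ a : α, ∃ b, ∃ n, (a, b) ∈ gchain G H ea eb n := by
    intro a
    obtain ⟨k, rfl⟩ := hea a
    obtain ⟨p, hp, hfst⟩ := List.mem_map.1 (gcover1 G H ea eb H1 H2 k)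
    exact ⟨p.2, 2 * k + 1, by rwa [show (ea k, p.2) = p from Prod.ext hfst.symm rfl]⟩
  set f : α → β := fun a => (total a).choose with hf
  have hfspec : ∀ a, ∃ n, (a, f a) ∈ gchain G H ea eb n := fun a => (total a).choose_spec
  have keyfun : ∀ {a : α} {b b' : β}, (∃ n, (a, b) ∈ gchain G H ea eb n) →
      (∃ n, (a, b') ∈ gchain G H ea eb n) → b = b' := by
    rintro a b b' ⟨n, hn⟩ ⟨m, hm⟩
    have h1 := gchain_mono G H ea eb (le_max_left n m) _ hn
    have h2 := gchain_mono G H ea eb (le_max_right n m) _ hm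
    have heq := List.inj_on_of_nodup_map (inv (max n m)).1 h1 h2 rfl
    exact (Prod.ext_iff.1 heq).2
  have valfun : ∀ {a a' : α} {b : β}, (∃ n, (a, b) ∈ gchain G H ea eb n) →
      (∃ n, (a', b) ∈ gchain G H ea eb n) → a = a' := by
    rintro a a' b ⟨n, hn⟩ ⟨m, hm⟩
    have h1 := gchain_mono G H ea eb (le_max_left n m) _ hn
    have h2 := gchain_mono G H ea eb (le_max_right n m) _ hm
    have heq := List.inj_on_of_nodup_map (inv (max n m)).2.1 h1 h2 rfl
    exact (Prod.ext_iff.1 heq).1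
  refine ⟨f, ⟨?_, ?_⟩, ?_⟩
  · intro a a' h
    exact valfun (hfspec a) (h ▸ hfspec a')
  · intro b
    obtain ⟨k, rfl⟩ := heb b
    obtain ⟨p, hp, hsnd⟩ := List.mem_map.1 (gcover2 G H ea eb H1 H2 k)
    refine ⟨p.1, ?_⟩
    exact keyfun (hfspec p.1) ⟨2 * k + 2, by rwa [show (p.1, eb k) = p from Prod.ext rfl hsnd.symm]⟩
  · intro u v huv
    obtain ⟨n, hn⟩ := hfspec u
    obtain ⟨m, hm⟩ := hfspec v
    have h1 := gchain_mono G H ea eb (le_max_left n m) _ hn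
    have h2 := gchain_mono G H ea eb (le_max_right n m) _ hm
    exact (inv (max n m)).2.2 _ h1 _ h2 huv

end Generic

theorem stmt_8 {V : Type*} [Countable V] [Infinite V] (G : SimpleGraph V) :
    ((∀ F : Set V, F.Finite → ∃ v ∉ F, ∀ u ∈ F, ¬ G.Adj v u) ↔
      IsSpanningSubgraphOf G radoGraph) ∧
    ((∀ F : Set V, F.Finite → ∃ v ∉ F, ∀ u ∈ F, G.Adj v u) ↔
      IsSpanningSubgraphOf radoGraph G) := by
  classical
  obtain ⟨e⟩ : Nonempty (V ≃ ℕ) := nonempty_equiv_of_countable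
  constructor
  · constructor
    · -- 0-ruled → spanning subgraph of Rado
      intro hG
      refine exists_spanning_aux G radoGraph (fun k => e.symm k) id ?_ ?_
          e.symm.surjective Function.surjective_id
      · -- H1 : given any vertex, find a suitable natural number
        intro l a
        set M := (l.map Prod.snd).foldr max 0 + 1 with hM
        have hM2 : M < 2 ^ M := Nat.lt_two_pow_self
        set b := orList ((l.filter fun q => G.Adj a q.1).map Prod.snd) (2 ^ M) with hb
        have hbM : b.testBit M = true :=
          (testBit_orList _ _ _).2 (Or.inr Nat.testBit_two_pow_self)
        have hb2 : 2 ^ M ≤ b := Nat.ge_two_pow_of_testBit hbM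
        refine ⟨b, ?_, ?_⟩
        · intro hmem
          have h1 := le_foldrMax _ _ hmem
          omega
        · intro q hq hadj
          have hqmem : q.2 ∈ (l.filter fun q => G.Adj a q.1).map Prod.snd :=
            List.mem_map.2 ⟨q, List.mem_filter.2 ⟨hq, by simpa using hadj⟩, rfl⟩
          have htb : b.testBit q.2 = true := (testBit_orList _ _ _).2 (Or.inl hqmem)
          have hlt : q.2 < b :=
            lt_of_lt_of_le ((Nat.lt_two_pow_self : q.2 < 2 ^ q.2)) (Nat.ge_two_pow_of_testBit htb)
          exact (rado_adj _ _).2 (Or.inr ⟨hlt, htb⟩)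
      · -- H2 : given any natural number, find a ruled vertex
        intro l b
        obtain ⟨v, hv, hvadj⟩ := hG {x | x ∈ l.map Prod.fst} (l.map Prod.fst).finite_toSet
        exact ⟨v, hv, fun q hq hadj =>
          absurd hadj (hvadj q.1 (List.mem_map_of_mem (f := Prod.fst) hq))⟩
    · -- spanning subgraph of Rado → 0-ruled
      rintro ⟨f, hbij, hedge⟩ F hF
      set S := hF.toFinset.image f with hS
      obtain ⟨n, hnS, hnadj⟩ := rado_ruled S
      obtain ⟨v, rfl⟩ := hbij.2 n
      refine ⟨v, ?_, ?_⟩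
      · intro hvF
        exact hnS (Finset.mem_image.2 ⟨v, hF.mem_toFinset.2 hvF, rfl⟩)
      · intro u hu hadj
        exact hnadj (f u) (Finset.mem_image.2 ⟨u, hF.mem_toFinset.2 hu, rfl⟩)
          (hedge v u hadj)
  · constructor
    · -- 0-coruled → Rado is a spanning subgraph
      intro hG
      refine exists_spanning_aux radoGraph G id (fun k => e.symm k) ?_ ?_
          Function.surjective_id e.symm.surjective
      · -- H1 : given any natural number, find a coruled vertex
        intro l a
        obtain ⟨v, hv, hvadj⟩ := hG {x | x ∈ l.map Prod.snd} (l.map Prod.snd).finite_toSet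
        exact ⟨v, hv, fun q hq _ => hvadj q.2 (List.mem_map_of_mem (f := Prod.snd) hq)⟩
      · -- H2 : given any vertex, find a natural number with no Rado edges to placed ones
        intro l b
        set M := (l.map Prod.fst).foldr max 0 + 1 with hM
        have hM2 : M < 2 ^ M := Nat.lt_two_pow_self
        refine ⟨2 ^ M, ?_, ?_⟩
        · intro hmem
          have h1 := le_foldrMax _ _ hmem
          omega
        · intro q hq hadj
          exfalso
          have hqM : q.1 < M :=
            Nat.lt_succ_of_le (le_foldrMax _ _ (List.mem_map_of_mem (f := Prod.fst) hq))
          rcases (rado_adj _ _).1 hadj with ⟨h, _⟩ | ⟨_, h⟩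
          · omega
          · rw [Nat.testBit_two_pow_of_ne (by omega : M ≠ q.1)] at h
            simp at h
    · -- Rado is a spanning subgraph → 0-coruled
      rintro ⟨f, hbij, hedge⟩ F hF
      let ef := Equiv.ofBijective f hbij
      set S := hF.toFinset.image ef.symm with hS
      obtain ⟨n, hnS, hnadj⟩ := rado_coruled S
      refine ⟨f n, ?_, ?_⟩
      · intro hmem
        exact hnS (Finset.mem_image.2 ⟨f n, hF.mem_toFinset.2 hmem, ef.symm_apply_apply n⟩)
      · intro u hu
        have h1 : ef.symm u ∈ S := Finset.mem_image.2 ⟨u, hF.mem_toFinset.2 hu, rfl⟩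
        have h2 := hnadj _ h1
        have h3 := hedge n (ef.symm u) h2
        rwa [show f (ef.symm u) = u from ef.apply_symm_apply u] at h3
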